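/- Fix t ≠ 0 and r > 0. Define s(t', r') ≥ 0 as the unique nonnegative real with cosh(s(t', r')) = cosh r' · cosh t', and β(t', r') = arcsin( sinh r' / sinh(s(t', r')) ). Let s_t, β_t denote the partial derivatives of s and β with respect to the first variable at (t, r), and s_r, β_r the partial derivatives with respect to the second variable at (t, r). Then sinh(s(t,r))² · β_t · β_r + s_t · s_r = 0. -/

import Mathlib

/-- The hypotenuse `s(t, r)`: the unique nonnegative real with
`cosh (polarS t r) = cosh r * cosh t` (see `polarS_nonneg` and `cosh_polarS`). -/
noncomputable def polarS (t r : ℝ) : ℝ :=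
  Real.arsinh (Real.sqrt ((Real.cosh r * Real.cosh t) ^ 2 - 1))

theorem polarS_nonneg (t r : ℝ) : 0 ≤ polarS t r :=
  Real.arsinh_nonneg_iff.mpr (Real.sqrt_nonneg _)

theorem cosh_polarS (t r : ℝ) : Real.cosh (polarS t r) = Real.cosh r * Real.cosh t := by
  have h1 : (1 : ℝ) ≤ Real.cosh r * Real.cosh t := by
    nlinarith [Real.one_le_cosh r, Real.one_le_cosh t]
  have h2 : (0 : ℝ) ≤ (Real.cosh r * Real.cosh t) ^ 2 - 1 := by nlinarith
  rw [polarS, Real.cosh_arsinh, Real.sq_sqrt h2]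
  rw [show (1 : ℝ) + ((Real.cosh r * Real.cosh t) ^ 2 - 1)
      = (Real.cosh r * Real.cosh t) ^ 2 by ring]
  exact Real.sqrt_sq (by linarith)

/-- The angle `β(t, r) = arcsin (sinh r / sinh (s(t, r)))`. -/
noncomputable def polarBeta (t r : ℝ) : ℝ :=
  Real.arcsin (Real.sinh r / Real.sinh (polarS t r))

/-- Fix `t ≠ 0` and `r > 0`. With `s = polarS` and `β = polarBeta` the polar
coordinates in terms of the Fermi coordinates `(t, r)`, the mixed component of the
coordinate identity holds: `sinh (s(t,r))² * β_t * β_r + s_t * s_r = 0`,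
where subscripts denote partial derivatives at `(t, r)`. -/
theorem fermi_polar_mixed_component (t r : ℝ) (ht : t ≠ 0) (hr : 0 < r) :
    Real.sinh (polarS t r) ^ 2 * deriv (fun t' : ℝ => polarBeta t' r) t
          * deriv (fun r' : ℝ => polarBeta t r') r
        + deriv (fun t' : ℝ => polarS t' r) t * deriv (fun r' : ℝ => polarS t r') r
      = 0 := by
  have hcr : 1 < Real.cosh r := Real.one_lt_cosh.mpr hr.ne'
  have hct : 1 < Real.cosh t := Real.one_lt_cosh.mpr ht
  have hshr : 0 < Real.sinh r := Real.sinh_pos_iff.mpr hr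
  set C : ℝ := Real.cosh r * Real.cosh t with hC
  have hC1 : 1 < C := by nlinarith
  have hC2 : 0 < C ^ 2 - 1 := by nlinarith
  set S : ℝ := Real.sqrt (C ^ 2 - 1) with hSdef
  have hS2 : S ^ 2 = C ^ 2 - 1 := Real.sq_sqrt hC2.le
  have hSpos : 0 < S := Real.sqrt_pos.mpr hC2
  have hSne : S ≠ 0 := hSpos.ne'
  have hsinhS : Real.sinh (polarS t r) = S := by
    rw [polarS, Real.sinh_arsinh, ← hC, ← hSdef]
  have hsqC : Real.sqrt (1 + S ^ 2) = C := by
    rw [hS2, show (1 : ℝ) + (C ^ 2 - 1) = C ^ 2 by ring]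
    exact Real.sqrt_sq (by linarith)
  -- t-derivatives of inner functions
  have hgt : HasDerivAt (fun t' : ℝ => (Real.cosh r * Real.cosh t') ^ 2 - 1)
      (2 * C ^ 1 * (Real.cosh r * Real.sinh t)) t :=
    (((Real.hasDerivAt_cosh t).const_mul (Real.cosh r)).pow 2).sub_const 1
  have hgr : HasDerivAt (fun r' : ℝ => (Real.cosh r' * Real.cosh t) ^ 2 - 1)
      (2 * C ^ 1 * (Real.sinh r * Real.cosh t)) r := by
    have := (((Real.hasDerivAt_cosh r).mul_const (Real.cosh t)).pow 2).sub_const 1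
    simpa [← hC] using this
  have hne : (Real.cosh r * Real.cosh t) ^ 2 - 1 ≠ 0 := by rw [← hC]; exact hC2.ne'
  have hsqt : HasDerivAt (fun t' : ℝ => Real.sqrt ((Real.cosh r * Real.cosh t') ^ 2 - 1))
      (1 / (2 * S) * (2 * C ^ 1 * (Real.cosh r * Real.sinh t))) t := by
    have := (Real.hasDerivAt_sqrt hne).comp t hgt
    simpa [← hC, ← hSdef, Function.comp_def] using this
  have hsqr : HasDerivAt (fun r' : ℝ => Real.sqrt ((Real.cosh r' * Real.cosh t) ^ 2 - 1))
      (1 / (2 * S) * (2 * C ^ 1 * (Real.sinh r * Real.cosh t))) r := by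
    have := (Real.hasDerivAt_sqrt hne).comp r hgr
    simpa [← hC, ← hSdef, Function.comp_def] using this
  -- derivatives of polarS
  have hst : HasDerivAt (fun t' : ℝ => polarS t' r) (Real.cosh r * Real.sinh t / S) t := by
    have h := (Real.hasDerivAt_arsinh S).comp t (by simpa [← hC, ← hSdef] using hsqt)
    have : HasDerivAt (fun t' : ℝ => polarS t' r)
        ((Real.sqrt (1 + S ^ 2))⁻¹ * (1 / (2 * S) * (2 * C ^ 1 * (Real.cosh r * Real.sinh t)))) t := by
      simpa [polarS, Function.comp_def] using h
    convert this using 1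
    rw [hsqC]
    field_simp
  have hsr : HasDerivAt (fun r' : ℝ => polarS t r') (Real.sinh r * Real.cosh t / S) r := by
    have h := (Real.hasDerivAt_arsinh S).comp r (by simpa [← hC, ← hSdef] using hsqr)
    have : HasDerivAt (fun r' : ℝ => polarS t r')
        ((Real.sqrt (1 + S ^ 2))⁻¹ * (1 / (2 * S) * (2 * C ^ 1 * (Real.sinh r * Real.cosh t)))) r := by
      simpa [polarS, Function.comp_def] using h
    convert this using 1
    rw [hsqC]
    field_simp
  -- the arcsin argument
  set x : ℝ := Real.sinh r / S with hxdef
  have hx0 : 0 < x := div_pos hshr hSpos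
  have hx1 : x < 1 := by
    rw [hxdef, div_lt_one hSpos]
    nlinarith [Real.sinh_sq r, Real.sinh_sq t, Real.cosh_sq r, Real.cosh_sq t]
  have hxne1 : x ≠ 1 := ne_of_lt hx1
  have hxnem1 : x ≠ -1 := by linarith
  set W : ℝ := Real.sqrt (1 - x ^ 2) with hWdef
  have h1x2 : 0 < 1 - x ^ 2 := by nlinarith
  have hW2 : W ^ 2 = 1 - x ^ 2 := Real.sq_sqrt h1x2.le
  have hWpos : 0 < W := Real.sqrt_pos.mpr h1x2
  have hWne : W ≠ 0 := hWpos.ne'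
  -- rewrite polarBeta functions
  have hβfun_t : (fun t' : ℝ => polarBeta t' r)
      = fun t' : ℝ => Real.arcsin (Real.sinh r / Real.sqrt ((Real.cosh r * Real.cosh t') ^ 2 - 1)) := by
    funext t'
    rw [polarBeta, polarS, Real.sinh_arsinh]
  have hβfun_r : (fun r' : ℝ => polarBeta t r')
      = fun r' : ℝ => Real.arcsin (Real.sinh r' / Real.sqrt ((Real.cosh r' * Real.cosh t) ^ 2 - 1)) := by
    funext r'
    rw [polarBeta, polarS, Real.sinh_arsinh]
  -- inner function derivatives for beta
  have hinner_t : HasDerivAt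
      (fun t' : ℝ => Real.sinh r / Real.sqrt ((Real.cosh r * Real.cosh t') ^ 2 - 1))
      ((0 * S - Real.sinh r * (1 / (2 * S) * (2 * C ^ 1 * (Real.cosh r * Real.sinh t)))) / S ^ 2) t := by
    have := (hasDerivAt_const t (Real.sinh r)).div hsqt (by rw [← hC, ← hSdef]; exact hSne)
    simpa [← hC, ← hSdef, Pi.div_def] using this
  have hinner_r : HasDerivAt
      (fun r' : ℝ => Real.sinh r' / Real.sqrt ((Real.cosh r' * Real.cosh t) ^ 2 - 1))
      ((Real.cosh r * S - Real.sinh r * (1 / (2 * S) * (2 * C ^ 1 * (Real.sinh r * Real.cosh t)))) / S ^ 2) r := by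
    have := (Real.hasDerivAt_sinh r).div hsqr (by rw [← hC, ← hSdef]; exact hSne)
    simpa [← hC, ← hSdef, Pi.div_def] using this
  have hβt : HasDerivAt (fun t' : ℝ => polarBeta t' r)
      (W⁻¹ * ((0 * S - Real.sinh r * (1 / (2 * S) * (2 * C ^ 1 * (Real.cosh r * Real.sinh t)))) / S ^ 2)) t := by
    rw [hβfun_t]
    have h := (Real.hasDerivAt_arcsin hxnem1 hxne1).comp t (by simpa [← hC, ← hSdef, ← hxdef] using hinner_t)
    simpa [← hC, ← hSdef, ← hxdef, ← hWdef, Function.comp_def] using h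
  have hβr : HasDerivAt (fun r' : ℝ => polarBeta t r')
      (W⁻¹ * ((Real.cosh r * S - Real.sinh r * (1 / (2 * S) * (2 * C ^ 1 * (Real.sinh r * Real.cosh t)))) / S ^ 2)) r := by
    rw [hβfun_r]
    have h := (Real.hasDerivAt_arcsin hxnem1 hxne1).comp r (by simpa [← hC, ← hSdef, ← hxdef] using hinner_r)
    simpa [← hC, ← hSdef, ← hxdef, ← hWdef, Function.comp_def] using h
  rw [hsinhS, hst.deriv, hsr.deriv, hβt.deriv, hβr.deriv]
  have hid_r : Real.cosh r ^ 2 - Real.sinh r ^ 2 = 1 := Real.cosh_sq_sub_sinh_sq r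
  have hid_t : Real.cosh t ^ 2 - Real.sinh t ^ 2 = 1 := Real.cosh_sq_sub_sinh_sq t
  have hB : S ^ 2 * Real.cosh r - C * Real.sinh r ^ 2 * Real.cosh t
      = Real.cosh r * Real.sinh t ^ 2 := by
    rw [hS2, hC]
    linear_combination (Real.cosh r * Real.cosh t ^ 2) * hid_r + Real.cosh r * hid_t
  have hWS : W ^ 2 * S ^ 2 = Real.cosh r ^ 2 * Real.sinh t ^ 2 := by
    rw [hW2, hxdef]
    field_simp
    rw [hS2, hC]
    linear_combination (Real.cosh t ^ 2 - Real.sinh t ^ 2) * hid_r + (1 + Real.sinh r ^ 2) * hid_t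
  field_simp
  linear_combination (-Real.sinh r * C * Real.cosh r * Real.sinh t) * hB
    + (Real.sinh r * Real.cosh r * Real.sinh t * Real.cosh t) * hWS
    + (-Real.sinh r * Real.cosh r ^ 2 * Real.sinh t ^ 3) * hC
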